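/- arXiv:2510.24219 — 3 statements merged into one kernel-verified Lean document; each statement's English description precedes it below -/
import Mathlib

section
/- Let f₁ be a characteristic function of a probability measure on ℝ with Im f₁(t) ≠ 0 for all t outside a countable set T ⊂ ℝ. Then there is a countable set D ⊂ (0,1) such that for every δ ∈ (0,1) \ D, the function t ↦ δ + (1-δ) f₁(t) has no zeros on ℝ. -/
open MeasureTheory Set Complex

/-- If `f₁` is the characteristic function of a probability measure on `ℝ`
whose imaginary part vanishes only on a countable set `T`, then there is a countable set
`D ⊆ (0,1)` such that for every `δ ∈ (0,1) \ D` the function `t ↦ δ + (1-δ) f₁ t`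
has no real zeros. -/
theorem stmt2 (μ : Measure ℝ) [IsProbabilityMeasure μ]
    (f₁ : ℝ → ℂ) (hf₁ : ∀ t : ℝ, f₁ t = ∫ x, Complex.exp (Complex.I * t * x) ∂μ)
    (T : Set ℝ) (hT : T.Countable) (him : ∀ t ∉ T, (f₁ t).im ≠ 0) :
    ∃ D ⊆ Set.Ioo (0:ℝ) 1, D.Countable ∧
      ∀ δ ∈ Set.Ioo (0:ℝ) 1, δ ∉ D → ∀ t : ℝ, (δ : ℂ) + (1 - δ) * f₁ t ≠ 0 := by
  refine ⟨((fun t => -(f₁ t).re / (1 - (f₁ t).re)) '' T) ∩ Set.Ioo (0:ℝ) 1,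
    Set.inter_subset_right, (hT.image _).mono Set.inter_subset_left, ?_⟩
  rintro δ hδ hδD t h
  have hδ1 : δ < 1 := hδ.2
  have hδ0 : 0 < δ := hδ.1
  -- look at imaginary part
  have him0 : (1 - δ) * (f₁ t).im = 0 := by
    have := congrArg Complex.im h
    simpa using this
  have htT : t ∈ T := by
    by_contra htT
    exact him t htT (by
      rcases mul_eq_zero.1 him0 with h1 | h2
      · linarith
      · exact h2)
  -- real part
  have hre : δ + (1 - δ) * (f₁ t).re = 0 := by
    have := congrArg Complex.re h
    simpa using this
  have h1δ : (1:ℝ) - δ ≠ 0 := by linarith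
  have hr : (f₁ t).re = -δ / (1 - δ) := by
    rw [eq_div_iff h1δ]; linarith
  apply hδD
  refine ⟨⟨t, htT, ?_⟩, hδ⟩
  simp only [hr]
  have hne : 1 - -δ / (1 - δ) ≠ 0 := by
    have hk : 1 - -δ / (1 - δ) = 1 / (1 - δ) := by field_simp; ring
    rw [hk]; exact one_div_ne_zero h1δ
  rw [div_eq_iff hne]
  field_simp
  ring
end

section
/- Let F₀ be a probability distribution function on ℝ with bounded support, with characteristic function f₀, and let γ₀ ∈ ℝ be such that γ₀ ≠ c(F₀) whenever F₀ is shift-symmetric, where c(F₀) is the center of the support. Then for all δ ∈ (0,1) except a countable set, δ e^{itγ₀} + (1-δ) f₀(t) ≠ 0 for every t ∈ ℝ. In particular, for any τ ∈ (0,1] there exists δ ∈ (0,τ) with this property. -/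
open MeasureTheory Set Complex Filter Topology

/-- The set of points of increase (support) of a distribution on `ℝ`. -/
def suppDF (μ : MeasureTheory.Measure ℝ) : Set ℝ :=
  {x : ℝ | ∀ ε > 0, 0 < μ (Set.Ioo (x - ε) (x + ε))}

/-- The center of the (bounded) support. -/
noncomputable def cextDF (μ : MeasureTheory.Measure ℝ) : ℝ :=
  (sInf (suppDF μ) + sSup (suppDF μ)) / 2

/-- `μ` is shift-symmetric: for some `c`, the shifted distribution function is symmetric. -/
def ShiftSym (μ : MeasureTheory.Measure ℝ) : Prop :=
  ∃ c : ℝ, ∀ x : ℝ, μ (Set.Iic (x + c)) = μ (Set.Ici (c - x))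

namespace Stmt3Aux

/-- A set of reals all of whose points are isolated is countable. -/
lemma countable_of_isolated {Z : Set ℝ} (h : ∀ z ∈ Z, ∀ᶠ w in 𝓝[≠] z, w ∉ Z) :
    Z.Countable := by
  have hd : DiscreteTopology Z := by
    rw [discreteTopology_subtype_iff]
    intro x hx
    exact inf_principal_eq_bot.mpr (h x hx)
  have : Countable Z := TopologicalSpace.separableSpace_iff_countable.mp inferInstance
  exact Set.countable_coe_iff.mp this

variable {ν : Measure ℝ} [IsFiniteMeasure ν] {M : ℝ}

omit [IsFiniteMeasure ν] in
lemma ae_abs_le (hM : ν {x | M < |x|} = 0) : ∀ᵐ x ∂ν, |x| ≤ M := by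
  rw [ae_iff]
  convert hM using 2
  ext x
  simp [not_le]

lemma integrable_of_continuous (hM : ν {x | M < |x|} = 0) {E : Type*} [NormedAddCommGroup E]
    (g : ℝ → E) (hg : Continuous g) : Integrable g ν := by
  obtain ⟨C, hC⟩ := (isCompact_Icc (a := -M) (b := M)).exists_bound_of_continuousOn
    hg.continuousOn
  refine Integrable.mono' (integrable_const C) hg.aestronglyMeasurable ?_
  filter_upwards [ae_abs_le hM] with x hx
  exact hC x (abs_le.mp hx)

omit [IsFiniteMeasure ν] in
lemma norm_integrand (n : ℕ) (z : ℂ) (x : ℝ) :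
    ‖(I * x) ^ n * Complex.exp (z * (I * x))‖ = |x| ^ n * Real.exp (-(z.im * x)) := by
  rw [norm_mul, norm_pow, Complex.norm_exp]
  have h1 : ‖I * (x : ℂ)‖ = |x| := by
    simp
  have h2 : (z * (I * ↑x)).re = -(z.im * x) := by
    simp [Complex.mul_re, Complex.mul_im]
  rw [h1, h2]

lemma hasDerivAt_G (hM : ν {x | M < |x|} = 0) (n : ℕ) (z₀ : ℂ) :
    HasDerivAt (fun z => ∫ x : ℝ, (I * x) ^ n * Complex.exp (z * (I * x)) ∂ν)
      (∫ x : ℝ, (I * x) ^ (n + 1) * Complex.exp (z₀ * (I * x)) ∂ν) z₀ := by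
  have key := hasDerivAt_integral_of_dominated_loc_of_deriv_le (μ := ν) (x₀ := z₀)
    (F := fun z (x : ℝ) => (I * x) ^ n * Complex.exp (z * (I * x)))
    (F' := fun z (x : ℝ) => (I * x) ^ (n + 1) * Complex.exp (z * (I * x)))
    (bound := fun x => (M ⊔ 0) ^ (n + 1) * Real.exp ((‖z₀‖ + 1) * (M ⊔ 0)))
    (Metric.ball_mem_nhds z₀ zero_lt_one) ?_ ?_ ?_ ?_ ?_ ?_
  · exact key.2
  · refine Eventually.of_forall (fun z => Continuous.aestronglyMeasurable ?_)
    fun_prop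
  · exact integrable_of_continuous hM _ (by fun_prop)
  · refine Continuous.aestronglyMeasurable ?_; fun_prop
  · filter_upwards [ae_abs_le hM] with x hx z hz
    rw [norm_integrand]
    have hx0 : |x| ≤ M ⊔ 0 := hx.trans le_sup_left
    have h1 : |x| ^ (n + 1) ≤ (M ⊔ 0) ^ (n + 1) := pow_le_pow_left₀ (abs_nonneg x) hx0 _
    have h2 : -(z.im * x) ≤ (‖z₀‖ + 1) * (M ⊔ 0) := by
      have ha : -(z.im * x) ≤ |z.im| * |x| := by
        calc -(z.im * x) ≤ |z.im * x| := neg_le_abs _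
        _ = |z.im| * |x| := abs_mul _ _
      refine ha.trans (mul_le_mul ?_ hx0 (abs_nonneg _) (by positivity))
      have hb : |z.im| ≤ ‖z‖ := Complex.abs_im_le_norm z
      refine hb.trans ?_
      have hc := norm_le_norm_add_norm_sub' z z₀
      have hz' : ‖z - z₀‖ ≤ 1 := by
        rw [Metric.mem_ball, dist_eq_norm] at hz; linarith
      linarith
    exact mul_le_mul h1 (Real.exp_le_exp.mpr h2) (Real.exp_pos _).le (by positivity)
  · exact integrable_const _
  · refine Eventually.of_forall (fun x z _ => ?_)
    have H : HasDerivAt (fun z : ℂ => Complex.exp (z * (I * x)))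
        (Complex.exp (z * (I * x)) * (I * x)) z :=
      (hasDerivAt_mul_const (I * (x : ℂ))).cexp
    have H2 := H.const_mul ((I * (x : ℂ)) ^ n)
    exact H2.congr_deriv (by ring)

end Stmt3Aux

/-- key lemma: Let `F₀` be a probability distribution on `ℝ` with bounded
support, characteristic function `f₀`, and `γ₀ ∈ ℝ` with `γ₀ ≠ c(F₀)` whenever `F₀` is
shift-symmetric. Then outside a countable set of `δ ∈ (0,1)` we have
`δ e^{itγ₀} + (1-δ) f₀ t ≠ 0` for all `t`; in particular for every `τ ∈ (0,1]` some
`δ ∈ (0,τ)` has this property. -/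
theorem stmt3 (μ : MeasureTheory.Measure ℝ) [IsProbabilityMeasure μ]
    (hbdd : ∃ R : ℝ, μ {x : ℝ | R < |x|} = 0)
    (f₀ : ℝ → ℂ) (hf₀ : ∀ t : ℝ, f₀ t = ∫ x, Complex.exp (Complex.I * t * x) ∂μ)
    (γ₀ : ℝ) (hγ₀ : ShiftSym μ → γ₀ ≠ cextDF μ) :
    (∃ D : Set ℝ, D.Countable ∧ ∀ δ ∈ Set.Ioo (0:ℝ) 1, δ ∉ D →
        ∀ t : ℝ, (δ : ℂ) * Complex.exp (Complex.I * t * γ₀) + (1 - δ) * f₀ t ≠ 0) ∧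
    ∀ τ ∈ Set.Ioc (0:ℝ) 1, ∃ δ ∈ Set.Ioo (0:ℝ) τ,
        ∀ t : ℝ, (δ : ℂ) * Complex.exp (Complex.I * t * γ₀) + (1 - δ) * f₀ t ≠ 0 := by
  classical
  obtain ⟨R, hR⟩ := hbdd
  have hμuniv : μ univ = 1 := measure_univ
  have hR0 : 0 ≤ R := by
    by_contra h
    push_neg at h
    have huniv : {x : ℝ | R < |x|} = univ :=
      eq_univ_of_forall (fun x => lt_of_lt_of_le h (abs_nonneg x))
    rw [huniv, hμuniv] at hR
    exact one_ne_zero hR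
  have hmeas_sub : Measurable (fun x : ℝ => x - γ₀) := measurable_id.sub_const γ₀
  set ν : Measure ℝ := μ.map (fun x => x - γ₀) with hν_def
  haveI hνprob : IsProbabilityMeasure ν := Measure.isProbabilityMeasure_map hmeas_sub.aemeasurable
  set M : ℝ := R + |γ₀| with hM_def
  have hM : ν {x : ℝ | M < |x|} = 0 := by
    rw [hν_def, Measure.map_apply hmeas_sub (by
      have : {x : ℝ | M < |x|} = (fun x : ℝ => |x|) ⁻¹' (Ioi M) := rfl
      rw [this]; exact (measurable_abs) measurableSet_Ioi)]
    refine measure_mono_null ?_ hR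
    intro x hx
    simp only [mem_preimage, mem_setOf_eq] at *
    have h1 : |x - γ₀| ≤ |x| + |γ₀| := abs_sub x γ₀
    have h2 : M = R + |γ₀| := rfl
    linarith
  set 𝔾 : ℕ → ℂ → ℂ := fun n z => ∫ x : ℝ, (I * x) ^ n * Complex.exp (z * (I * x)) ∂ν
    with hG_def
  have hGderiv : ∀ (n : ℕ) (z₀ : ℂ), HasDerivAt (𝔾 n) (𝔾 (n + 1) z₀) z₀ :=
    fun n z₀ => Stmt3Aux.hasDerivAt_G hM n z₀
  have hf₀G : ∀ t : ℝ, f₀ t = Complex.exp (I * t * γ₀) * 𝔾 0 ↑t := by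
    intro t
    rw [hf₀ t, hG_def]
    simp only
    rw [hν_def, integral_map hmeas_sub.aemeasurable
      (Continuous.aestronglyMeasurable (by fun_prop)), ← integral_const_mul]
    congr 1; funext x
    rw [pow_zero, one_mul, ← Complex.exp_add]
    congr 1
    push_cast
    ring
  have hkey : ∀ (δ : ℝ) (t : ℝ),
      ((δ : ℂ) * Complex.exp (I * t * γ₀) + (1 - δ) * f₀ t = 0 ↔
        (δ : ℂ) + (1 - δ) * 𝔾 0 ↑t = 0) := by
    intro δ t
    rw [hf₀G t]
    have hid : (δ : ℂ) * Complex.exp (I * t * γ₀)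
        + (1 - δ) * (Complex.exp (I * t * γ₀) * 𝔾 0 ↑t)
        = Complex.exp (I * t * γ₀) * ((δ : ℂ) + (1 - δ) * 𝔾 0 ↑t) := by ring
    rw [hid, mul_eq_zero]
    simp [Complex.exp_ne_zero]
  set Z : Set ℝ := {t : ℝ | (𝔾 0 ↑t).im = 0} with hZ_def
  set D : Set ℝ := (fun t : ℝ => -(𝔾 0 ↑t).re / (1 - (𝔾 0 ↑t).re)) '' Z with hD_def
  -- Case C : if the imaginary part vanishes identically, contradiction with hγ₀
  have hns : ¬ ∀ t : ℝ, (𝔾 0 ↑t).im = 0 := by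
    intro hC
    have hCn : ∀ n : ℕ, ∀ t : ℝ, (𝔾 n ↑t).im = 0 := by
      intro n
      induction n with
      | zero => exact hC
      | succ n ih =>
        intro t
        have H : HasDerivAt (fun s : ℝ => 𝔾 n ↑s) (𝔾 (n + 1) ↑t) t :=
          (hGderiv n ↑t).comp_ofReal
        have Him : HasDerivAt (fun s : ℝ => (𝔾 n ↑s).im) ((𝔾 (n + 1) ↑t).im) t :=
          (Complex.imCLM.hasFDerivAt.comp_hasDerivAt t H)
        have Hz : HasDerivAt (fun s : ℝ => (𝔾 n ↑s).im) 0 t := by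
          have he : (fun s : ℝ => (𝔾 n ↑s).im) = fun _ => (0 : ℝ) := funext (fun s => ih s)
          rw [he]; exact hasDerivAt_const t 0
        exact Him.unique Hz
    have hmom : ∀ n : ℕ, Odd n → ∫ x : ℝ, x ^ n ∂ν = 0 := by
      intro n hn
      have h0 : (𝔾 n 0).im = 0 := by
        have := hCn n 0
        simpa using this
      have hGn0 : 𝔾 n 0 = I ^ n * ((∫ x : ℝ, x ^ n ∂ν : ℝ) : ℂ) := by
        rw [hG_def]
        simp only
        calc ∫ x : ℝ, (I * x) ^ n * Complex.exp (0 * (I * x)) ∂ν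
            = ∫ x : ℝ, I ^ n * ((x : ℂ)) ^ n ∂ν := by
              congr 1; funext x
              rw [zero_mul, Complex.exp_zero, mul_one, mul_pow]
          _ = I ^ n * ∫ x : ℝ, ((x : ℂ)) ^ n ∂ν := integral_const_mul _ _
          _ = I ^ n * ((∫ x : ℝ, x ^ n ∂ν : ℝ) : ℂ) := by
              congr 1
              simp only [← Complex.ofReal_pow]
              exact integral_ofReal (𝕜 := ℂ) (μ := ν) (f := fun x : ℝ => x ^ n)
      obtain ⟨k, hk⟩ := hn
      have hI : (I : ℂ) ^ n = (((-1 : ℝ) ^ k : ℝ) : ℂ) * I := by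
        rw [hk, pow_add, pow_mul, Complex.I_sq, pow_one]
        push_cast; ring
      rw [hGn0, hI] at h0
      have hmul : ((-1 : ℝ) ^ k) * (∫ x : ℝ, x ^ n ∂ν) = 0 := by
        simp only [Complex.mul_im, Complex.mul_re, Complex.ofReal_re, Complex.ofReal_im,
          Complex.I_re, Complex.I_im, mul_zero, zero_mul, mul_one, one_mul, add_zero,
          zero_add, sub_zero, zero_sub, neg_zero] at h0
        linarith
      have hk0 : ((-1 : ℝ) ^ k) ≠ 0 := pow_ne_zero k (by norm_num)
      exact (mul_eq_zero.mp hmul).resolve_left hk0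
    have hmom' : ∀ n : ℕ, ∫ x : ℝ, (-x) ^ n ∂ν = ∫ x : ℝ, x ^ n ∂ν := by
      intro n
      rcases Nat.even_or_odd n with he | ho
      · congr 1; funext x; exact he.neg_pow x
      · calc ∫ x : ℝ, (-x) ^ n ∂ν = ∫ x : ℝ, -(x ^ n) ∂ν := by
              congr 1; funext x; exact ho.neg_pow x
          _ = -∫ x : ℝ, x ^ n ∂ν := integral_neg _
          _ = ∫ x : ℝ, x ^ n ∂ν := by rw [hmom n ho, neg_zero]
    have hpoly : ∀ p : Polynomial ℝ, ∫ x : ℝ, p.eval (-x) ∂ν = ∫ x : ℝ, p.eval x ∂ν := by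
      intro p
      induction p using Polynomial.induction_on' with
      | add p q hp hq =>
        have ip : Integrable (fun x : ℝ => p.eval x) ν :=
          Stmt3Aux.integrable_of_continuous hM _ p.continuous
        have iq : Integrable (fun x : ℝ => q.eval x) ν :=
          Stmt3Aux.integrable_of_continuous hM _ q.continuous
        have ipn : Integrable (fun x : ℝ => p.eval (-x)) ν :=
          Stmt3Aux.integrable_of_continuous hM _ (p.continuous.comp continuous_neg)
        have iqn : Integrable (fun x : ℝ => q.eval (-x)) ν :=
          Stmt3Aux.integrable_of_continuous hM _ (q.continuous.comp continuous_neg)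
        simp only [Polynomial.eval_add]
        rw [integral_add ipn iqn, integral_add ip iq, hp, hq]
      | monomial n a =>
        simp only [Polynomial.eval_monomial]
        rw [integral_const_mul, integral_const_mul, hmom' n]
    have hbcont : ∀ g : ℝ → ℝ, Continuous g →
        ∫ x : ℝ, g (-x) ∂ν = ∫ x : ℝ, g x ∂ν := by
      intro g hg
      have key : ∀ ε > (0 : ℝ), |(∫ x : ℝ, g (-x) ∂ν) - ∫ x : ℝ, g x ∂ν| ≤ ε := by
        intro ε hε
        obtain ⟨p, hp⟩ := exists_polynomial_near_of_continuousOn (-M) M g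
          hg.continuousOn (ε / 2) (by linarith)
        have ig : Integrable g ν := Stmt3Aux.integrable_of_continuous hM _ hg
        have ign : Integrable (fun x : ℝ => g (-x)) ν :=
          Stmt3Aux.integrable_of_continuous hM _ (hg.comp continuous_neg)
        have ipp : Integrable (fun x : ℝ => p.eval x) ν :=
          Stmt3Aux.integrable_of_continuous hM _ p.continuous
        have ipn : Integrable (fun x : ℝ => p.eval (-x)) ν :=
          Stmt3Aux.integrable_of_continuous hM _ (p.continuous.comp continuous_neg)
        have hae : ∀ᵐ x ∂ν, x ∈ Icc (-M) M := by
          filter_upwards [Stmt3Aux.ae_abs_le hM] with x hx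
          rw [mem_Icc, ← abs_le]; exact hx
        have b1 : |(∫ x : ℝ, g (-x) ∂ν) - ∫ x : ℝ, p.eval (-x) ∂ν| ≤ ε / 2 := by
          rw [← integral_sub ign ipn]
          calc |∫ x : ℝ, (g (-x) - p.eval (-x)) ∂ν|
              ≤ ∫ x : ℝ, |g (-x) - p.eval (-x)| ∂ν := by
                simpa [Real.norm_eq_abs] using
                  norm_integral_le_integral_norm (μ := ν) (fun x : ℝ => g (-x) - p.eval (-x))
            _ ≤ ∫ _x : ℝ, (ε / 2) ∂ν := by
                refine integral_mono_ae ((ign.sub ipn).abs) (integrable_const _) ?_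
                filter_upwards [hae] with x hx
                have hmem : -x ∈ Icc (-M) M := by
                  rw [mem_Icc] at hx ⊢; constructor <;> linarith [hx.1, hx.2]
                have := hp (-x) hmem
                rw [abs_sub_comm]
                exact this.le
            _ = ε / 2 := by simp
        have b2 : |(∫ x : ℝ, g x ∂ν) - ∫ x : ℝ, p.eval x ∂ν| ≤ ε / 2 := by
          rw [← integral_sub ig ipp]
          calc |∫ x : ℝ, (g x - p.eval x) ∂ν|
              ≤ ∫ x : ℝ, |g x - p.eval x| ∂ν := by
                simpa [Real.norm_eq_abs] using
                  norm_integral_le_integral_norm (μ := ν) (fun x : ℝ => g x - p.eval x)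
            _ ≤ ∫ _x : ℝ, (ε / 2) ∂ν := by
                refine integral_mono_ae ((ig.sub ipp).abs) (integrable_const _) ?_
                filter_upwards [hae] with x hx
                have := hp x hx
                rw [abs_sub_comm]
                exact this.le
            _ = ε / 2 := by simp
        have b3 := hpoly p
        calc |(∫ x : ℝ, g (-x) ∂ν) - ∫ x : ℝ, g x ∂ν|
            ≤ |(∫ x : ℝ, g (-x) ∂ν) - ∫ x : ℝ, p.eval (-x) ∂ν|
              + |(∫ x : ℝ, p.eval (-x) ∂ν) - ∫ x : ℝ, g x ∂ν| := abs_sub_le _ _ _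
          _ ≤ ε / 2 + ε / 2 := by
              refine add_le_add b1 ?_
              rw [b3, abs_sub_comm]
              exact b2
          _ = ε := by ring
      have h0 : |(∫ x : ℝ, g (-x) ∂ν) - ∫ x : ℝ, g x ∂ν| ≤ 0 := by
        refine le_of_forall_pos_le_add (fun ε hε => ?_)
        simpa using key ε hε
      have := abs_nonpos_iff.mp h0
      linarith [sub_eq_zero.mp this]
    have hνsym : ν = ν.map Neg.neg := by
      apply ext_of_forall_lintegral_eq_of_IsFiniteMeasure
      intro f
      have hfc : Continuous (fun x : ℝ => (f x : ℝ)) :=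
        NNReal.continuous_coe.comp (map_continuous f)
      rw [lintegral_map (by
        exact (map_continuous f).measurable.coe_nnreal_ennreal) measurable_neg]
      rw [lintegral_coe_eq_integral f (Stmt3Aux.integrable_of_continuous hM _ hfc),
        lintegral_coe_eq_integral (fun x => f (-x))
          (Stmt3Aux.integrable_of_continuous hM _ (hfc.comp continuous_neg))]
      rw [hbcont _ hfc]
    have hshift : ShiftSym μ := by
      refine ⟨γ₀, fun x => ?_⟩
      have h1 : μ (Iic (x + γ₀)) = ν (Iic x) := by
        rw [hν_def, Measure.map_apply hmeas_sub measurableSet_Iic]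
        congr 1; ext y; simp [sub_le_iff_le_add]
      have h2 : ν (Iic x) = ν (Ici (-x)) := by
        conv_lhs => rw [hνsym]
        rw [Measure.map_apply measurable_neg measurableSet_Iic]
        congr 1; ext y; simp [neg_le]
      have h3 : ν (Ici (-x)) = μ (Ici (γ₀ - x)) := by
        rw [hν_def, Measure.map_apply hmeas_sub measurableSet_Ici]
        congr 1; ext y
        simp only [mem_preimage, mem_Ici]
        constructor <;> intro h <;> linarith
      rw [h1, h2, h3]
    have hmapμ : μ = μ.map (fun x : ℝ => 2 * γ₀ - x) := by
      have hadd : Measurable fun x : ℝ => x + γ₀ := by fun_prop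
      have hneg2 : Measurable fun x : ℝ => γ₀ - x := by fun_prop
      have e1 : ν.map Neg.neg = μ.map (fun x : ℝ => γ₀ - x) := by
        rw [hν_def, Measure.map_map measurable_neg hmeas_sub]
        congr 1; funext x; simp only [Function.comp_apply]; ring_nf
      have e3 : μ.map (fun x : ℝ => x - γ₀) = μ.map (fun x : ℝ => γ₀ - x) := by
        rw [← hν_def]
        conv_lhs => rw [hνsym]
        exact e1
      calc μ = (μ.map (fun x : ℝ => x - γ₀)).map (fun x : ℝ => x + γ₀) := by
            rw [Measure.map_map hadd hmeas_sub]
            have hc : ((fun x : ℝ => x + γ₀) ∘ fun x : ℝ => x - γ₀) = id := by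
              funext x; simp
            rw [hc, Measure.map_id]
        _ = (μ.map (fun x : ℝ => γ₀ - x)).map (fun x : ℝ => x + γ₀) := by rw [e3]
        _ = μ.map (fun x : ℝ => 2 * γ₀ - x) := by
            rw [Measure.map_map hadd hneg2]
            congr 1; funext x; simp only [Function.comp_apply]; ring
    have hsupp_symm : ∀ x : ℝ, x ∈ suppDF μ → 2 * γ₀ - x ∈ suppDF μ := by
      intro x hx ε hε
      have heq : μ (Ioo (2 * γ₀ - x - ε) (2 * γ₀ - x + ε)) = μ (Ioo (x - ε) (x + ε)) := by
        conv_lhs => rw [hmapμ]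
        rw [Measure.map_apply (show Measurable fun x : ℝ => 2 * γ₀ - x by fun_prop)
          measurableSet_Ioo]
        congr 1; ext y
        simp only [mem_preimage, mem_Ioo]
        constructor <;> rintro ⟨ha, hb⟩ <;> constructor <;> linarith
      rw [heq]
      exact hx ε hε
    have hsupp_sub : suppDF μ ⊆ Icc (-R) R := by
      intro x hx
      rw [mem_Icc, ← abs_le]
      by_contra hc
      push_neg at hc
      have hεpos : 0 < |x| - R := by linarith
      have h1 := hx _ hεpos
      have h2 : Ioo (x - (|x| - R)) (x + (|x| - R)) ⊆ {y : ℝ | R < |y|} := by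
        intro y hy
        simp only [mem_Ioo] at hy
        simp only [mem_setOf_eq]
        have hzz : |x - y| < |x| - R := abs_sub_lt_iff.mpr ⟨by linarith [hy.2], by linarith [hy.1]⟩
        have h3 := abs_sub_abs_le_abs_sub x y
        linarith
      have := measure_mono_null h2 hR
      rw [this] at h1
      exact lt_irrefl 0 h1
    have hsupp_ne : (suppDF μ).Nonempty := by
      by_contra hc
      rw [not_nonempty_iff_eq_empty] at hc
      have hall : ∀ x : ℝ, ∃ ε > (0 : ℝ), μ (Ioo (x - ε) (x + ε)) = 0 := by
        intro x
        by_contra hx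
        push_neg at hx
        have hmem : x ∈ suppDF μ := by
          intro ε hε
          exact lt_of_le_of_ne zero_le (Ne.symm (hx ε hε))
        rw [hc] at hmem
        exact hmem
      choose ε hεpos hεnull using hall
      obtain ⟨s, hs⟩ := (isCompact_Icc (a := -R) (b := R)).elim_finite_subcover
        (fun x : ℝ => Ioo (x - ε x) (x + ε x)) (fun x => isOpen_Ioo)
        (fun y _ => mem_iUnion.mpr ⟨y, by
          rw [mem_Ioo]; constructor <;> linarith [hεpos y]⟩)
      have h1 : μ (Icc (-R) R) = 0 := by
        refine le_antisymm ?_ zero_le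
        calc μ (Icc (-R) R) ≤ μ (⋃ x ∈ s, Ioo (x - ε x) (x + ε x)) := measure_mono hs
          _ ≤ ∑ x ∈ s, μ (Ioo (x - ε x) (x + ε x)) := measure_biUnion_finset_le s _
          _ = 0 := by
              refine Finset.sum_eq_zero (fun x _ => hεnull x)
      have h2 : μ univ ≤ μ {x : ℝ | R < |x|} + μ (Icc (-R) R) := by
        calc μ univ ≤ μ ({x : ℝ | R < |x|} ∪ Icc (-R) R) := by
              refine measure_mono (fun x _ => ?_)
              rcases le_or_gt |x| R with h | h
              · exact Or.inr (by rw [mem_Icc, ← abs_le]; exact h)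
              · exact Or.inl h
          _ ≤ _ := measure_union_le _ _
      rw [hR, h1, hμuniv] at h2
      simp at h2
    have hBddA : BddAbove (suppDF μ) := ⟨R, fun x hx => (hsupp_sub hx).2⟩
    have hBddB : BddBelow (suppDF μ) := ⟨-R, fun x hx => (hsupp_sub hx).1⟩
    have hub : sSup (suppDF μ) ≤ 2 * γ₀ - sInf (suppDF μ) := by
      refine csSup_le hsupp_ne (fun x hx => ?_)
      have := csInf_le hBddB (hsupp_symm x hx)
      linarith
    have hlb : 2 * γ₀ - sSup (suppDF μ) ≤ sInf (suppDF μ) := by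
      refine le_csInf hsupp_ne (fun x hx => ?_)
      have := le_csSup hBddA (hsupp_symm x hx)
      linarith
    have hcext : cextDF μ = γ₀ := by
      unfold cextDF
      linarith
    exact hγ₀ hshift hcext.symm
  push_neg at hns
  obtain ⟨t₁, ht₁⟩ := hns
  have hA : ∀ t : ℝ, AnalyticAt ℝ (fun s : ℝ => (𝔾 0 ↑s).im) t := by
    intro t
    have hdiff : Differentiable ℂ (𝔾 0) := fun z => (hGderiv 0 z).differentiableAt
    have h2 : AnalyticAt ℝ (𝔾 0) ↑t := (hdiff.analyticAt ↑t).restrictScalars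
    have h3 : AnalyticAt ℝ (fun s : ℝ => 𝔾 0 ↑s) t :=
      h2.comp (Complex.ofRealCLM.analyticAt t)
    have h4 : AnalyticAt ℝ (Complex.imCLM ∘ fun s : ℝ => 𝔾 0 ↑s) t :=
      AnalyticAt.comp (g := fun z : ℂ => z.im) (f := fun s : ℝ => 𝔾 0 ↑s)
        (Complex.imCLM.analyticAt (𝔾 0 ↑t)) h3
    exact h4
  have hZc : Z.Countable := by
    refine Stmt3Aux.countable_of_isolated (fun z hz => ?_)
    rcases (hA z).eventually_eq_zero_or_eventually_ne_zero with h | h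
    · exfalso
      have hOn : AnalyticOnNhd ℝ (fun s : ℝ => (𝔾 0 ↑s).im) univ := fun t _ => hA t
      have heq := hOn.eqOn_zero_of_preconnected_of_eventuallyEq_zero isPreconnected_univ
        (mem_univ z) (by exact h.mono (fun w hw => by simpa using hw))
      exact ht₁ (heq (mem_univ t₁))
    · exact h.mono (fun w hw hwZ => hw hwZ)
  have hDc : D.Countable := hZc.image _
  have hmain : ∀ δ ∈ Ioo (0 : ℝ) 1, δ ∉ D →
      ∀ t : ℝ, (δ : ℂ) * Complex.exp (I * t * γ₀) + (1 - δ) * f₀ t ≠ 0 := by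
    intro δ hδ hδD t h
    rw [hkey δ t] at h
    have h1δ : (1 : ℝ) - δ ≠ 0 := by
      have := hδ.2; intro hcc; linarith
    have him : (𝔾 0 ↑t).im = 0 := by
      have h2 := congrArg Complex.im h
      simp only [Complex.add_im, Complex.ofReal_im, Complex.mul_im, Complex.sub_re,
        Complex.one_re, Complex.ofReal_re, Complex.sub_im, Complex.one_im,
        Complex.zero_im, zero_add, zero_sub, zero_mul, neg_zero, add_zero] at h2
      -- h2 : (1 - δ) * (𝔾 0 ↑t).im + -0 * (𝔾 0 ↑t).re = 0 or similar
      rcases mul_eq_zero.mp (by linarith [h2] : ((1 : ℝ) - δ) * (𝔾 0 ↑t).im = 0) with hcc | hcc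
      · exact absurd hcc h1δ
      · exact hcc
    have hre := congrArg Complex.re h
    simp only [Complex.add_re, Complex.ofReal_re, Complex.mul_re, Complex.sub_re,
      Complex.one_re, Complex.sub_im, Complex.one_im, Complex.ofReal_im,
      Complex.zero_re, zero_sub, neg_zero, zero_mul, sub_zero, him, mul_zero] at hre
    -- hre : δ + (1 - δ) * (𝔾 0 ↑t).re = 0
    set r : ℝ := (𝔾 0 ↑t).re with hr_def
    have hr1 : 1 - r ≠ 0 := by
      intro hcc
      have : r = 1 := by linarith
      rw [this] at hre
      simp only [mul_one] at hre
      linarith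
    have hδval : δ = -r / (1 - r) := by
      field_simp
      linarith
    exact hδD ⟨t, him, hδval.symm⟩
  refine ⟨⟨D, hDc, hmain⟩, ?_⟩
  intro τ hτ
  have hDm : volume D = 0 := Set.Countable.measure_zero hDc volume
  have hnsub : ¬ (Ioo (0 : ℝ) τ ⊆ D) := by
    intro hsub
    have hle := measure_mono (μ := volume) hsub
    rw [hDm, Real.volume_Ioo] at hle
    simp only [nonpos_iff_eq_zero, ENNReal.ofReal_eq_zero] at hle
    linarith [hτ.1]
  obtain ⟨δ, hδI, hδD⟩ := not_subset.mp hnsub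
  exact ⟨δ, hδI, hmain δ ⟨hδI.1, lt_of_lt_of_le hδI.2 hτ.2⟩ hδD⟩
end

section
/- Let β₁, …, β_m be real numbers linearly independent over ℚ, and let g : ℝ^m → ℂ be continuous and periodic in the j-th variable with period 2π/β_j for each j. Then the closure of the range of the diagonal restriction t ↦ g(t, t, …, t), t ∈ ℝ, equals the closure of the range of g on ℝ^m. In particular, if |g(t,…,t)| ≥ μ > 0 for all t ∈ ℝ, then |g(t₁,…,t_m)| ≥ μ for all (t₁,…,t_m) ∈ ℝ^m. -/
open Complex Real


lemma coeff_bound {ι : Type*} [DecidableEq ι] (s : Finset ι) (c : ι → ℝ) (hc : Set.InjOn c s)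
    (b : ι → ℂ) (B : ℝ) (hB : 0 ≤ B)
    (h : ∀ t : ℝ, ‖∑ k ∈ s, b k * Complex.exp ((c k : ℂ) * Complex.I * t)‖ ≤ B)
    {k₀ : ι} (hk₀ : k₀ ∈ s) : ‖b k₀‖ ≤ B := by
  set d : ι → ℂ := fun k => ((c k - c k₀ : ℝ) : ℂ) * Complex.I with hd
  have hS' : ∀ t : ℝ, ‖∑ k ∈ s, b k * Complex.exp (d k * t)‖ ≤ B := by
    intro t
    have : (∑ k ∈ s, b k * Complex.exp (d k * t))
        = (∑ k ∈ s, b k * Complex.exp ((c k : ℂ) * Complex.I * t))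
          * Complex.exp (-((c k₀ : ℝ) : ℂ) * Complex.I * t) := by
      rw [Finset.sum_mul]
      refine Finset.sum_congr rfl fun k _ => ?_
      symm
      rw [mul_assoc (b k), ← Complex.exp_add]
      congr 2
      push_cast [hd]
      ring
    rw [this, norm_mul]
    have h1 : ‖Complex.exp (-((c k₀ : ℝ) : ℂ) * Complex.I * t)‖ = 1 := by
      rw [Complex.norm_exp]
      simp
    rw [h1, mul_one]
    exact h t
  have hdne : ∀ k ∈ s, k ≠ k₀ → d k ≠ 0 := by
    intro k hk hne
    refine mul_ne_zero ?_ Complex.I_ne_zero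
    simp only [ne_eq, Complex.ofReal_eq_zero, sub_eq_zero]
    exact fun hcc => hne (hc hk hk₀ hcc)
  set C : ℝ := ∑ k ∈ s.erase k₀, ‖b k‖ * (2 / |c k - c k₀|) with hC
  have hCnn : 0 ≤ C := Finset.sum_nonneg fun k _ => by positivity
  have key : ∀ T : ℝ, 0 < T → T * ‖b k₀‖ ≤ B * T + C := by
    intro T hT
    have hint : (∫ t in (0:ℝ)..T, ∑ k ∈ s, b k * Complex.exp (d k * t))
        = (T : ℂ) * b k₀ + ∑ k ∈ s.erase k₀, b k * ((Complex.exp (d k * T) - 1) / d k) := by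
      rw [intervalIntegral.integral_finset_sum]
      · rw [← Finset.add_sum_erase _ _ hk₀]
        congr 1
        · have h0 : d k₀ = 0 := by simp [hd]
          simp [h0, mul_comm]
        · refine Finset.sum_congr rfl fun k hk => ?_
          rw [intervalIntegral.integral_const_mul, integral_exp_mul_complex
            (hdne k (Finset.mem_of_mem_erase hk) (Finset.ne_of_mem_erase hk))]
          simp
      · intro k _
        exact (Continuous.intervalIntegrable (by continuity) _ _)
    have hle : ‖(∫ t in (0:ℝ)..T, ∑ k ∈ s, b k * Complex.exp (d k * t))‖ ≤ B * T := by
      have := intervalIntegral.norm_integral_le_of_norm_le_const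
        (f := fun t => ∑ k ∈ s, b k * Complex.exp (d k * t)) (C := B) (a := 0) (b := T)
        (fun x _ => hS' x)
      simpa [abs_of_pos hT] using this
    have htail : ‖∑ k ∈ s.erase k₀, b k * ((Complex.exp (d k * T) - 1) / d k)‖ ≤ C := by
      refine (norm_sum_le _ _).trans ?_
      refine Finset.sum_le_sum fun k hk => ?_
      rw [norm_mul]
      refine mul_le_mul_of_nonneg_left ?_ (norm_nonneg _)
      rw [norm_div]
      have hdk : ‖d k‖ = |c k - c k₀| := by
        rw [hd]
        simp only [norm_mul, Complex.norm_I, mul_one, Complex.norm_real, Real.norm_eq_abs]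
      rw [hdk]
      have hpos : 0 < |c k - c k₀| := by
        rcases Finset.mem_erase.mp hk with ⟨hne, hks⟩
        have : c k - c k₀ ≠ 0 := sub_ne_zero.mpr (fun hcc => hne (hc hks hk₀ hcc))
        exact abs_pos.mpr this
      gcongr
      calc ‖Complex.exp (d k * T) - 1‖ ≤ ‖Complex.exp (d k * T)‖ + ‖(1:ℂ)‖ := norm_sub_le _ _
        _ ≤ 2 := by
          have : ‖Complex.exp (d k * T)‖ = 1 := by
            rw [Complex.norm_exp]
            simp [hd]
          rw [this, norm_one]; norm_num
    have hnorm : ‖(T:ℂ) * b k₀‖ = T * ‖b k₀‖ := by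
      rw [norm_mul, Complex.norm_real, Real.norm_eq_abs, abs_of_pos hT]
    calc T * ‖b k₀‖ = ‖(T:ℂ) * b k₀‖ := hnorm.symm
      _ ≤ ‖(T:ℂ) * b k₀ + ∑ k ∈ s.erase k₀, b k * ((Complex.exp (d k * T) - 1) / d k)‖
          + ‖∑ k ∈ s.erase k₀, b k * ((Complex.exp (d k * T) - 1) / d k)‖ :=
        norm_le_add_norm_add _ _
      _ ≤ B * T + C := by rw [← hint]; exact add_le_add hle htail
  by_contra h'
  push_neg at h'
  have hpos : 0 < ‖b k₀‖ - B := by linarith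
  have hT : 0 < (C + 1) / (‖b k₀‖ - B) := by positivity
  have := key _ hT
  have heq : (C + 1) / (‖b k₀‖ - B) * (‖b k₀‖ - B) = C + 1 := by
    exact div_mul_cancel₀ _ hpos.ne'
  nlinarith [this, heq]
lemma norm_one_add_exp (θ : ℝ) :
    ‖(1 + Complex.exp ((θ : ℂ) * Complex.I))‖ = Real.sqrt (2 + 2 * Real.cos θ) := by
  have h : (1 + Complex.exp ((θ : ℂ) * Complex.I))
      = Complex.ofReal (1 + Real.cos θ) + Complex.ofReal (Real.sin θ) * Complex.I := by
    rw [Complex.exp_mul_I]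
    push_cast
    ring
  rw [h, Complex.norm_def, Complex.normSq_apply]
  congr 1
  simp only [Complex.add_re, Complex.ofReal_re, Complex.mul_re, Complex.I_re, Complex.I_im,
    Complex.ofReal_im, Complex.add_im, Complex.mul_im]
  nlinarith [Real.sin_sq_add_cos_sq θ]

lemma norm_one_add_exp_le_two (θ : ℝ) :
    ‖(1 + Complex.exp ((θ : ℂ) * Complex.I))‖ ≤ 2 := by
  rw [norm_one_add_exp]
  have : (2:ℝ) = Real.sqrt 4 := by
    rw [show (4:ℝ) = 2^2 by norm_num, Real.sqrt_sq (by norm_num)]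
  rw [this]
  exact Real.sqrt_le_sqrt (by nlinarith [Real.cos_le_one θ])
lemma kronecker_flow (m : ℕ) (β : Fin m → ℝ)
    (hind : ∀ r : Fin m → ℚ, (∑ j, (r j : ℝ) * β j) = 0 → ∀ j, r j = 0)
    (x : Fin m → ℝ) (δ : ℝ) (hδ : 0 < δ) (hδπ : δ ≤ π) :
    ∃ t : ℝ, ∀ j, Real.cos δ < Real.cos (t * β j - x j) := by
  by_contra hcon
  push_neg at hcon
  obtain ⟨j₀, -⟩ := hcon 0
  have hm : 0 < m := j₀.pos
  -- injectivity of frequencies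
  have hcinj : Function.Injective (fun k : Fin m → ℕ => ∑ j, (k j : ℝ) * β j) := by
    intro k k' hkk
    simp only at hkk
    funext j
    have h1 : ∑ j, ((((k j : ℚ) - (k' j : ℚ)) : ℚ) : ℝ) * β j = 0 := by
      push_cast
      rw [Finset.sum_congr rfl (fun j _ => sub_mul ((k j : ℝ)) ((k' j : ℝ)) (β j)),
        Finset.sum_sub_distrib, sub_eq_zero]
      exact hkk
    have h2 := hind _ h1 j
    have h3 : (k j : ℚ) = (k' j : ℚ) := by linarith [sub_eq_zero.mp h2]
    exact_mod_cast h3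
  set B : ℝ := max (Real.sqrt (2 + 2 * Real.cos δ) * 2 ^ (m - 1)) 1 with hB
  have hB1 : (1:ℝ) ≤ B := le_max_right _ _
  have hBpos : (0:ℝ) < B := lt_of_lt_of_le one_pos hB1
  have hcosδ : Real.cos δ < 1 := by
    have := Real.strictAntiOn_cos (Set.left_mem_Icc.mpr Real.pi_pos.le)
      ⟨hδ.le, hδπ⟩ hδ
    simpa using this
  have hpowm : (2:ℝ) ^ m = 2 * 2 ^ (m - 1) := by
    have h' : m - 1 + 1 = m := Nat.succ_pred_eq_of_pos hm
    calc (2:ℝ) ^ m = 2 ^ (m - 1 + 1) := by rw [h']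
      _ = 2 * 2 ^ (m - 1) := by rw [pow_succ]; ring
  have hBlt : B < 2 ^ m := by
    rw [hB]
    apply max_lt
    · rw [hpowm]
      have hs : Real.sqrt (2 + 2 * Real.cos δ) < 2 := by
        rw [Real.sqrt_lt' (by norm_num)]
        nlinarith
      have : (0:ℝ) < 2 ^ (m-1) := by positivity
      nlinarith
    · exact one_lt_pow₀ (by norm_num) hm.ne'
  -- uniform bound on F
  have hFB : ∀ t : ℝ, ‖∏ j, (1 + Complex.exp ((↑(t * β j - x j)) * Complex.I))‖ ≤ B := by
    intro t
    obtain ⟨j, hj⟩ := hcon t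
    rw [norm_prod, ← Finset.mul_prod_erase _ _ (Finset.mem_univ j)]
    refine le_trans ?_ (le_max_left _ _)
    have h1 : ‖1 + Complex.exp ((↑(t * β j - x j)) * Complex.I)‖
        ≤ Real.sqrt (2 + 2 * Real.cos δ) := by
      rw [norm_one_add_exp]
      exact Real.sqrt_le_sqrt (by nlinarith)
    have h2 : ∏ j' ∈ Finset.univ.erase j, ‖1 + Complex.exp ((↑(t * β j' - x j')) * Complex.I)‖
        ≤ 2 ^ (m - 1) := by
      calc ∏ j' ∈ Finset.univ.erase j, ‖1 + Complex.exp ((↑(t * β j' - x j')) * Complex.I)‖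
          ≤ ∏ _j' ∈ Finset.univ.erase j, (2:ℝ) :=
            Finset.prod_le_prod (fun _ _ => norm_nonneg _)
              (fun j' _ => norm_one_add_exp_le_two _)
        _ = 2 ^ (m - 1) := by
            rw [Finset.prod_const, Finset.card_erase_of_mem (Finset.mem_univ j),
              Finset.card_univ, Fintype.card_fin]
    exact mul_le_mul h1 h2 (Finset.prod_nonneg fun _ _ => norm_nonneg _) (Real.sqrt_nonneg _)
  -- the central bound for every n
  have hmain : ∀ n : ℕ, ((n.centralBinom : ℝ)) ^ m ≤ B ^ (2 * n) := by
    intro n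
    set p := 2 * n with hp
    set c : (Fin m → ℕ) → ℝ := fun k => ∑ j, (k j : ℝ) * β j with hcdef
    set b : (Fin m → ℕ) → ℂ := fun k =>
      (∏ j, (p.choose (k j) : ℂ)) *
        Complex.exp (-(((∑ j, (k j : ℝ) * x j : ℝ)) : ℂ) * Complex.I) with hbdef
    have hk₀mem : (fun _ : Fin m => n) ∈ Fintype.piFinset (fun _ : Fin m => Finset.range (p+1)) := by
      simp [Fintype.mem_piFinset, hp]
      omega
    have hsum : ∀ t : ℝ,
        (∑ k ∈ Fintype.piFinset (fun _ : Fin m => Finset.range (p+1)),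
          b k * Complex.exp ((c k : ℂ) * Complex.I * t))
        = (∏ j, (1 + Complex.exp ((↑(t * β j - x j)) * Complex.I))) ^ p := by
      intro t
      rw [← Finset.prod_pow]
      have hterm : ∀ j : Fin m, (1 + Complex.exp ((↑(t * β j - x j)) * Complex.I)) ^ p
          = ∑ k ∈ Finset.range (p+1),
              Complex.exp ((↑(t * β j - x j)) * Complex.I) ^ k * (p.choose k : ℂ) := by
        intro j
        rw [add_comm, add_pow]
        exact Finset.sum_congr rfl fun k _ => by rw [one_pow, mul_one]
      rw [Finset.prod_congr rfl (fun j _ => hterm j), Finset.prod_univ_sum]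
      refine Finset.sum_congr rfl fun k hk => ?_
      rw [Finset.prod_mul_distrib]
      have h1 : ∏ j, Complex.exp ((↑(t * β j - x j)) * Complex.I) ^ (k j)
          = Complex.exp (((c k : ℝ) : ℂ) * Complex.I * t
              + -(((∑ j, (k j : ℝ) * x j : ℝ)) : ℂ) * Complex.I) := by
        rw [Finset.prod_congr rfl (fun j _ => (Complex.exp_nat_mul _ (k j)).symm),
          ← Complex.exp_sum]
        congr 1
        rw [hcdef]
        push_cast
        simp only [Finset.sum_mul, neg_mul, ← Finset.sum_neg_distrib,
          ← Finset.sum_add_distrib]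
        exact Finset.sum_congr rfl fun j _ => by ring
      rw [h1, Complex.exp_add, hbdef]
      ring
    have hbound : ∀ t : ℝ,
        ‖∑ k ∈ Fintype.piFinset (fun _ : Fin m => Finset.range (p+1)),
          b k * Complex.exp ((c k : ℂ) * Complex.I * t)‖ ≤ B ^ p := by
      intro t
      rw [hsum t, norm_pow]
      exact pow_le_pow_left₀ (norm_nonneg _) (hFB t) p
    have := coeff_bound _ c hcinj.injOn b (B ^ p) (by positivity) hbound hk₀mem
    have hbn : ‖b (fun _ : Fin m => n)‖ = ((n.centralBinom : ℝ)) ^ m := by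
      rw [hbdef]
      simp only [norm_mul, norm_prod]
      have he : ‖Complex.exp (-(((∑ j : Fin m, (n : ℝ) * x j : ℝ)) : ℂ) * Complex.I)‖ = 1 := by
        rw [Complex.norm_exp]
        simp
      rw [he, mul_one]
      have : ∀ j : Fin m, ‖((p.choose n : ℕ) : ℂ)‖ = (n.centralBinom : ℝ) := by
        intro j
        rw [Complex.norm_natCast]
        norm_cast
      rw [Finset.prod_congr rfl (fun j _ => this j), Finset.prod_const, Finset.card_univ,
        Fintype.card_fin]
    rwa [hbn] at this
  -- derive contradiction
  set q : ℝ := (2:ℝ) ^ m / B with hq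
  have hq1 : 1 < q := (one_lt_div hBpos).mpr hBlt
  have hr1 : 1 < q ^ 2 := one_lt_pow₀ hq1 (by norm_num)
  have htend := tendsto_pow_const_div_const_pow_of_one_lt m hr1
  have hev := (htend.eventually_lt_const (by positivity : (0:ℝ) < 1 / 2 ^ m)).and
    (Filter.eventually_ge_atTop 1)
  obtain ⟨n, hlt, hn1⟩ := hev.exists
  have hcb : (4:ℝ) ^ n ≤ (2 * n) * n.centralBinom := by
    exact_mod_cast Nat.four_pow_le_two_mul_self_mul_centralBinom n hn1
  have hcbpos : (0:ℝ) < n.centralBinom := by exact_mod_cast n.centralBinom_pos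
  have h4 : ((4:ℝ) ^ n) ^ m ≤ ((2 * n) * n.centralBinom) ^ m :=
    pow_le_pow_left₀ (by positivity) hcb m
  have h5 : ((2 * (n:ℝ)) * n.centralBinom) ^ m ≤ (2 * (n:ℝ)) ^ m * B ^ (2 * n) := by
    rw [mul_pow]
    exact mul_le_mul_of_nonneg_left (hmain n) (by positivity)
  have h6 : ((4:ℝ) ^ n) ^ m = (q ^ 2) ^ n * B ^ (2 * n) := by
    have hB2 : (B:ℝ) ^ 2 ≠ 0 := by positivity
    have hqB : q ^ 2 * B ^ 2 = ((2:ℝ) ^ m) ^ 2 := by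
      rw [hq, div_pow, div_mul_cancel₀ _ hB2]
    calc ((4:ℝ) ^ n) ^ m = ((2:ℝ) ^ m) ^ (2 * n) := by
          rw [← pow_mul, show (4:ℝ) = 2 ^ 2 by norm_num, ← pow_mul, ← pow_mul]
          congr 1
          ring
      _ = (q ^ 2 * B ^ 2) ^ n := by rw [pow_mul, hqB]
      _ = (q ^ 2) ^ n * B ^ (2 * n) := by rw [mul_pow, ← pow_mul, ← pow_mul]
  have hBpow : (0:ℝ) < B ^ (2 * n) := by positivity
  have h7 : (q ^ 2) ^ n ≤ (2 * (n:ℝ)) ^ m := by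
    have := h4.trans h5
    rw [h6] at this
    calc (q ^ 2) ^ n = (q ^ 2) ^ n * B ^ (2*n) / B ^ (2*n) := by field_simp
      _ ≤ (2 * (n:ℝ)) ^ m * B ^ (2*n) / B ^ (2*n) := by gcongr
      _ = (2 * (n:ℝ)) ^ m := by field_simp
  have h8 : (2 * (n:ℝ)) ^ m = 2 ^ m * (n:ℝ) ^ m := mul_pow 2 _ m
  have hq2pos : (0:ℝ) < (q^2)^n := by positivity
  rw [div_lt_iff₀ hq2pos] at hlt
  have : (2:ℝ) ^ m * (n:ℝ) ^ m < (q ^ 2) ^ n := by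
    have h2m : (0:ℝ) < 2 ^ m := by positivity
    calc (2:ℝ)^m * (n:ℝ)^m < 2^m * (1 / 2^m * (q^2)^n) := by
          exact mul_lt_mul_of_pos_left hlt h2m
      _ = (q^2)^n := by field_simp
  linarith [h7, h8 ▸ h7]

lemma cos_lt_imp (θ δ : ℝ) (hδ : 0 < δ) (hδπ : δ ≤ π)
    (h : Real.cos δ < Real.cos θ) : ∃ n : ℤ, |θ - 2 * π * n| < δ := by
  set n : ℤ := round (θ / (2 * π)) with hn
  refine ⟨n, ?_⟩
  have h2π : (0:ℝ) < 2 * π := by positivity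
  have habs : |θ - 2 * π * n| ≤ π := by
    have h1 : |θ / (2 * π) - n| ≤ 1 / 2 := abs_sub_round (θ / (2 * π))
    have h2 : θ - 2 * π * n = (θ / (2 * π) - n) * (2 * π) := by
      field_simp
    rw [h2, abs_mul, abs_of_pos h2π]
    calc |θ / (2 * π) - ↑n| * (2 * π) ≤ 1 / 2 * (2 * π) :=
          mul_le_mul_of_nonneg_right h1 h2π.le
      _ = π := by ring
  have hcos : Real.cos (θ - 2 * π * n) = Real.cos θ := by
    rw [show θ - 2 * π * n = θ + ((-n : ℤ) : ℝ) * (2 * π) by push_cast; ring]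
    exact Real.cos_add_int_mul_two_pi θ (-n)
  by_contra hge
  push_neg at hge
  have hc2 : Real.cos |θ - 2 * π * n| ≤ Real.cos δ := by
    rcases eq_or_lt_of_le hge with h' | h'
    · rw [← h']
    · exact (Real.strictAntiOn_cos ⟨hδ.le, hδπ⟩ ⟨by positivity, habs⟩ h').le
  rw [Real.cos_abs, hcos] at hc2
  linarith

variable {m : ℕ} {β : Fin m → ℝ} {g : (Fin m → ℝ) → ℂ}

lemma per_int
    (hper : ∀ (j : Fin m) (t : Fin m → ℝ),
      g (Function.update t j (t j + 2 * Real.pi / β j)) = g t)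
    (k : ℤ) (j : Fin m) (t : Fin m → ℝ) :
    g (Function.update t j (t j + k * (2 * Real.pi / β j))) = g t := by
  induction k using Int.induction_on with
  | zero => simp
  | succ i ih =>
    have h1 := hper j (Function.update t j (t j + (i : ℤ) * (2 * Real.pi / β j)))
    rw [Function.update_self, Function.update_idem] at h1
    rw [show ((((i : ℤ) + 1 : ℤ)) : ℝ) * (2 * Real.pi / β j)
        = ((i : ℤ) : ℝ) * (2 * Real.pi / β j) + 2 * Real.pi / β j by push_cast; ring,
      ← add_assoc, h1]
    exact ih
  | pred i ih =>
    have h1 := hper j (Function.update t j (t j + ((-(i:ℤ) - 1 : ℤ)) * (2 * Real.pi / β j)))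
    rw [Function.update_self, Function.update_idem] at h1
    rw [show t j + (((-(i:ℤ) - 1 : ℤ)) : ℝ) * (2 * Real.pi / β j) + 2 * Real.pi / β j
        = t j + ((-(i:ℤ) : ℤ) : ℝ) * (2 * Real.pi / β j) by push_cast; ring] at h1
    exact h1.symm.trans ih

lemma per_multi
    (hper : ∀ (j : Fin m) (t : Fin m → ℝ),
      g (Function.update t j (t j + 2 * Real.pi / β j)) = g t)
    (nn : Fin m → ℤ) (v : Fin m → ℝ) :
    g (fun j => v j + nn j * (2 * Real.pi / β j)) = g v := by
  have key : ∀ s : Finset (Fin m),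
      g (fun j => if j ∈ s then v j + nn j * (2 * Real.pi / β j) else v j) = g v := by
    intro s
    induction s using Finset.induction with
    | empty => simp
    | @insert a s ha ih =>
      have harg : (fun j => if j ∈ insert a s then v j + nn j * (2 * Real.pi / β j) else v j)
          = Function.update (fun j => if j ∈ s then v j + nn j * (2 * Real.pi / β j) else v j) a
            ((fun j => if j ∈ s then v j + nn j * (2 * Real.pi / β j) else v j) a
              + nn a * (2 * Real.pi / β a)) := by
      
        funext j
        by_cases hja : j = a
        · subst hja
          rw [Function.update_self]
          simp [ha]
        · rw [Function.update_of_ne hja]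
          simp [Finset.mem_insert, hja]
      rw [harg, per_int hper, ih]
  have := key Finset.univ
  simpa using this

/-- Let `β₁, …, β_m` be nonzero reals linearly independent over `ℚ` and let
`g : ℝ^m → ℂ` be continuous and `2π/β_j`-periodic in the `j`-th variable.  Then the closure
of the range of the diagonal restriction `t ↦ g(t,…,t)` equals the closure of the range of
`g`; in particular if `|g(t,…,t)| ≥ μ > 0` for all real `t`, then `|g| ≥ μ` everywhere. -/
theorem stmt18 (m : ℕ) (β : Fin m → ℝ) (hβ0 : ∀ j, β j ≠ 0)
    (hind : ∀ r : Fin m → ℚ, (∑ j, (r j : ℝ) * β j) = 0 → ∀ j, r j = 0)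
    (g : (Fin m → ℝ) → ℂ) (hg : Continuous g)
    (hper : ∀ (j : Fin m) (t : Fin m → ℝ),
      g (Function.update t j (t j + 2 * Real.pi / β j)) = g t) :
    closure (Set.range (fun t : ℝ => g (fun _ => t))) = closure (Set.range g) ∧
    ∀ μ : ℝ, 0 < μ → (∀ t : ℝ, μ ≤ ‖g (fun _ => t)‖) →
      ∀ t : Fin m → ℝ, μ ≤ ‖g t‖ := by
  have hdense : Set.range g ⊆ closure (Set.range (fun t : ℝ => g (fun _ => t))) := by
    rintro z ⟨t0, rfl⟩
    by_cases hm : m = 0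
    · subst hm
      have ht0 : t0 = fun _ => (0:ℝ) := funext fun j => j.elim0
      rw [ht0]
      exact subset_closure ⟨0, rfl⟩
    · have hm' : 0 < m := Nat.pos_of_ne_zero hm
      haveI : Nonempty (Fin m) := ⟨⟨0, hm'⟩⟩
      rw [Metric.mem_closure_iff]
      intro ε hε
      obtain ⟨δ', hδ', hcont⟩ := Metric.continuousAt_iff.mp (hg.continuousAt (x := t0)) (ε := ε) hε
      set bmin : ℝ := Finset.univ.inf' Finset.univ_nonempty (fun j => |β j|) with hbmin
      have hbminpos : 0 < bmin := by
        rw [hbmin, Finset.lt_inf'_iff]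
        exact fun j _ => abs_pos.mpr (hβ0 j)
      have hbminle : ∀ j, bmin ≤ |β j| := fun j => Finset.inf'_le _ (Finset.mem_univ j)
      set δk : ℝ := min ((δ' / 2) * bmin) π with hδk
      have hδkpos : 0 < δk := lt_min (by positivity) Real.pi_pos
      have hδkπ : δk ≤ π := min_le_right _ _
      obtain ⟨t, ht⟩ := kronecker_flow m β hind (fun j => t0 j * β j) δk hδkpos hδkπ
      choose nn hnn using fun j => cos_lt_imp _ _ hδkpos hδkπ (ht j)
      set u : Fin m → ℝ := fun j => t - nn j * (2 * π / β j) with hu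
      have hgu : g (fun _ => t) = g u := by
        have harg : (fun _ : Fin m => t) = fun j => u j + nn j * (2 * π / β j) := by
          funext j
          rw [hu]
          ring
        rw [harg]
        exact per_multi hper nn u
      have hdist : dist u t0 < δ' := by
        rw [dist_pi_lt_iff hδ']
        intro j
        rw [Real.dist_eq]
        have heq : u j - t0 j = (t * β j - t0 j * β j - 2 * π * nn j) / β j := by
          rw [hu]
          field_simp [hβ0 j]
          ring
        rw [heq, abs_div]
        have h1 : |t * β j - t0 j * β j - 2 * π * nn j| / |β j| < δk / |β j| := by
          rw [div_lt_div_iff_of_pos_right (abs_pos.mpr (hβ0 j))]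
          exact hnn j
        have h2 : δk / |β j| ≤ δk / bmin :=
          div_le_div_of_nonneg_left hδkpos.le hbminpos (hbminle j)
        have h3 : δk / bmin ≤ δ' / 2 := by
          rw [div_le_iff₀ hbminpos]
          calc δk ≤ (δ' / 2) * bmin := min_le_left _ _
            _ = δ' / 2 * bmin := rfl
        linarith
      refine ⟨g (fun _ => t), ⟨t, rfl⟩, ?_⟩
      rw [hgu, dist_comm]
      exact hcont hdist
  have hsub : Set.range (fun t : ℝ => g (fun _ => t)) ⊆ Set.range g := by
    rintro z ⟨t, rfl⟩
    exact ⟨fun _ => t, rfl⟩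
  have hpart1 : closure (Set.range (fun t : ℝ => g (fun _ => t))) = closure (Set.range g) :=
    Set.Subset.antisymm (closure_mono hsub) (closure_minimal hdense isClosed_closure)
  refine ⟨hpart1, ?_⟩
  intro μ hμ hlo t
  have hmem : g t ∈ closure (Set.range (fun t : ℝ => g (fun _ => t))) :=
    hdense ⟨t, rfl⟩
  have hclosed : IsClosed {z : ℂ | μ ≤ ‖z‖} :=
    isClosed_le continuous_const continuous_norm
  have hS : Set.range (fun t : ℝ => g (fun _ => t)) ⊆ {z : ℂ | μ ≤ ‖z‖} := by
    rintro z ⟨s, rfl⟩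
    exact hlo s
  exact closure_minimal hS hclosed hmem
end
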